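/- Let a, b be natural numbers and let S : Fin a → Finset (Fin b) be a family of row-sets of an a × b grid (S i is the set of colored cells in row i) such that the grid contains no axis-aligned rectangle, i.e., for any two distinct rows i ≠ j, |S i ∩ S j| ≤ 1. Then Σ_{i=1}^{a} C(|S i|, 2) ≤ C(b, 2), where C(·,2) denotes the binomial coefficient 'choose 2'. Consequently, b² − b ≥ Σ_{i=1}^{a} |S i|² − Σ_{i=1}^{a} |S i|. -/
import Mathlib


open Finset

lemma two_mul_choose_two_int (n : ℕ) : (n : ℤ) ^ 2 - n = 2 * n.choose 2 := by
  induction n with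
  | zero => simp
  | succ n ih =>
      rw [Nat.choose_succ_succ, Nat.choose_one_right]
      push_cast
      push_cast at ih
      nlinarith [ih]

/-- Consider an `a × b` grid of cells, where `S i` is the set of colored cells in row `i`,
containing no axis-aligned rectangle: any two distinct rows share at most one colored column.
Then `∑ i, C(|S i|, 2) ≤ C(b, 2)`, and consequently `b² - b ≥ ∑ i, |S i|² - ∑ i, |S i|`. -/
theorem rectangle_free_grid_bound (a b : ℕ) (S : Fin a → Finset (Fin b))
    (h : ∀ i j : Fin a, i ≠ j → ((S i) ∩ (S j)).card ≤ 1) :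
    (∑ i, ((S i).card.choose 2)) ≤ b.choose 2 ∧
      (∑ i, ((S i).card : ℤ) ^ 2) - (∑ i, ((S i).card : ℤ)) ≤ (b : ℤ) ^ 2 - (b : ℤ) := by
  have hdisj : ∀ i ∈ (univ : Finset (Fin a)), ∀ j ∈ (univ : Finset (Fin a)), i ≠ j →
      Disjoint ((S i).powersetCard 2) ((S j).powersetCard 2) := by
    intro i _ j _ hij
    rw [Finset.disjoint_left]
    intro t hti htj
    rw [Finset.mem_powersetCard] at hti htj
    have hsub : t ⊆ S i ∩ S j := Finset.subset_inter hti.1 htj.1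
    have := (Finset.card_le_card hsub).trans (h i j hij)
    omega
  have hmain : (∑ i, ((S i).card.choose 2)) ≤ b.choose 2 := by
    calc ∑ i, ((S i).card.choose 2)
        = ∑ i, ((S i).powersetCard 2).card := by
          simp [Finset.card_powersetCard]
      _ = ((univ : Finset (Fin a)).biUnion fun i => (S i).powersetCard 2).card :=
          (Finset.card_biUnion hdisj).symm
      _ ≤ ((univ : Finset (Fin b)).powersetCard 2).card := by
          apply Finset.card_le_card
          intro t ht
          rw [Finset.mem_biUnion] at ht
          obtain ⟨i, _, hti⟩ := ht
          rw [Finset.mem_powersetCard] at hti ⊢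
          exact ⟨Finset.subset_univ t, hti.2⟩
      _ = b.choose 2 := by simp [Finset.card_powersetCard]
  refine ⟨hmain, ?_⟩
  have h2 : (∑ i, ((S i).card : ℤ) ^ 2) - (∑ i, ((S i).card : ℤ))
      = 2 * ∑ i, (((S i).card.choose 2 : ℕ) : ℤ) := by
    rw [← Finset.sum_sub_distrib, Finset.mul_sum]
    exact Finset.sum_congr rfl fun i _ => two_mul_choose_two_int _
  rw [h2, two_mul_choose_two_int b]
  have : (∑ i, (((S i).card.choose 2 : ℕ) : ℤ)) ≤ (b.choose 2 : ℤ) := by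
    rw [← Nat.cast_sum]; exact_mod_cast hmain
  linarith
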